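/- For all μ₁, μ₂ > 0, the critical spectral efficiency factor α* = 2(μ₁+μ₂)²/((μ₁+μ₂)² + μ₁² + μ₂²) satisfies 1 < α* ≤ 4/3, with equality α* = 4/3 if and only if μ₁ = μ₂. -/
import Mathlib


theorem critical_alpha_bounds (μ₁ μ₂ : ℝ) (h₁ : 0 < μ₁) (h₂ : 0 < μ₂) :
    1 < 2 * (μ₁ + μ₂)^2 / ((μ₁ + μ₂)^2 + μ₁^2 + μ₂^2) ∧
    2 * (μ₁ + μ₂)^2 / ((μ₁ + μ₂)^2 + μ₁^2 + μ₂^2) ≤ 4/3 ∧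
    (2 * (μ₁ + μ₂)^2 / ((μ₁ + μ₂)^2 + μ₁^2 + μ₂^2) = 4/3 ↔ μ₁ = μ₂) := by
  have hd : (0:ℝ) < (μ₁ + μ₂)^2 + μ₁^2 + μ₂^2 := by positivity
  refine ⟨?_, ?_, ?_, ?_⟩
  · rw [lt_div_iff₀ hd]; nlinarith
  · rw [div_le_iff₀ hd]; nlinarith [sq_nonneg (μ₁ - μ₂)]
  · intro h
    rw [div_eq_iff (ne_of_gt hd)] at h
    nlinarith [sq_nonneg (μ₁ - μ₂)]
  · intro h; subst h
    rw [div_eq_iff (ne_of_gt hd)]; ring
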